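/- Let G be a finite simple graph and let D be any dominating set of G. Then there exists a proper coloring c of G such that D is an up-color dominating c-set of G. -/
import Mathlib


/-- `D` is an up-color dominating `c`-set of `G`. -/
def IsUCDomSet {V : Type*} (G : SimpleGraph V) (c : V → ℕ) (D : Finset V) : Prop :=
  (∀ v ∉ D, ∃ d ∈ D, G.Adj v d ∧ c v < c d) ∧ ∀ d ∈ D, 1 ≤ c d

/-- `D` is a dominating set of `G`. -/
def IsDomSet {V : Type*} (G : SimpleGraph V) (D : Finset V) : Prop :=
  ∀ v ∉ D, ∃ d ∈ D, G.Adj v d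

theorem stmt_2 {V : Type*} [Fintype V] (G : SimpleGraph V)
    (D : Finset V) (hD : IsDomSet G D) :
    ∃ c : V → ℕ, (∀ ⦃u v⦄, G.Adj u v → c u ≠ c v) ∧ IsUCDomSet G c D := by
  classical
  set N := Fintype.card V with hN
  let e : V → ℕ := fun v => ((Fintype.equivFin V) v : ℕ)
  have einj : Function.Injective e := fun a b h => by
    have := (Fintype.equivFin V).injective (Fin.ext h)
    exact this
  have elt : ∀ v, e v < N := fun v => ((Fintype.equivFin V) v).isLt
  refine ⟨fun v => if v ∈ D then N + e v + 1 else e v, ?_, ?_, ?_⟩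
  · intro u v hadj heq
    by_cases hu : u ∈ D <;> by_cases hv : v ∈ D <;> simp [hu, hv] at heq
    · exact G.ne_of_adj hadj (einj heq)
    · have := elt v; omega
    · have := elt u; omega
    · exact G.ne_of_adj hadj (einj heq)
  · intro v hv
    obtain ⟨d, hd, hadj⟩ := hD v hv
    refine ⟨d, hd, hadj, ?_⟩
    simp only [hv, hd, if_true, if_false, if_neg hv, if_pos hd]
    have := elt v; omega
  · intro d hd
    simp [hd]
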